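/- Let m ≥ 3 and d ≥ 1. The number of words of length d over {r, s} in D_m that reduce to the identity e equals (if d is even then C(d−1, d/2) else 0) + Σ_ℓ C(d, (d − ℓm)/2), where the sum runs over all integers ℓ ≥ 1 with ℓm ≤ d and d ≡ ℓm (mod 2), and C(a,b) denotes the binomial coefficient. -/

import Mathlib

open DihedralGroup Finset

namespace DWC

abbrev Vec (n : ℕ) := List.Vector Bool n

def letter (m : ℕ) : Bool → DihedralGroup m := fun b => if b then sr 0 else r 1

def stp : Bool → Bool × ℤ → Bool × ℤ
  | false, (e, a) => (e, if e then a - 1 else a + 1)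
  | true,  (e, a) => (!e, a)

def Phi (L : List Bool) : Bool × ℤ := L.foldr stp (false, 0)

@[simp] lemma Phi_nil : Phi [] = (false, 0) := rfl
@[simp] lemma Phi_cons (x : Bool) (L : List Bool) : Phi (x :: L) = stp x (Phi L) := rfl

lemma prod_map_letter (m : ℕ) (L : List Bool) :
    (L.map (letter m)).prod =
      if (Phi L).1 then sr (((Phi L).2 : ℤ) : ZMod m) else r (((Phi L).2 : ℤ) : ZMod m) := by
  induction L with
  | nil => simp
  | cons x L ih =>
    rcases h : Phi L with ⟨e, a⟩
    rw [h] at ih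
    cases x <;> cases e <;>
      simp only [List.map_cons, List.prod_cons, ih, Phi_cons, h, stp, letter, if_true,
        if_false, Bool.not_false, Bool.not_true, r_mul_r, r_mul_sr, sr_mul_r, sr_mul_sr] <;>
      push_cast <;> simp [r_mul_r, r_mul_sr, sr_mul_r, sr_mul_sr, add_comm, sub_eq_add_neg, add_left_comm]

def psi : List Bool → List Bool
  | [] => []
  | _ :: L => (Phi L).1 :: psi L

@[simp] lemma psi_nil : psi [] = [] := rfl
@[simp] lemma psi_cons (x : Bool) (L : List Bool) : psi (x :: L) = (Phi L).1 :: psi L := rfl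

@[simp] lemma psi_length (L : List Bool) : (psi L).length = L.length := by
  induction L with
  | nil => rfl
  | cons x L ih => simp [ih]

lemma phi_snd_eq (L : List Bool) :
    (Phi L).2 + (if (Phi L).1 then 1 else 0) = (L.length : ℤ) - 2 * (psi L).count true := by
  induction L with
  | nil => simp
  | cons x L ih =>
    rcases h : Phi L with ⟨e, a⟩
    rw [h] at ih
    cases x <;> cases e <;>
      simp [stp, List.count_cons, h] at ih ⊢ <;> omega

lemma psi_inj : ∀ L L' : List Bool, psi L = psi L' → (Phi L).1 = (Phi L').1 → L = L'
  | [], [], _, _ => rfl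
  | [], _ :: _, h, _ => by simp at h
  | _ :: _, [], h, _ => by simp at h
  | x :: L, x' :: L', h, h2 => by
    simp only [psi_cons, List.cons_eq_cons] at h
    obtain ⟨h1, hrest⟩ := h
    have hLL : L = L' := psi_inj L L' hrest h1
    subst hLL
    cases x <;> cases x' <;> simp_all [stp] <;>
      · rcases hh : Phi L with ⟨e, a⟩ <;> rw [hh] at h2 <;> cases e <;> simp [stp, hh] at h2

lemma psi_getLast? (L : List Bool) (h : L ≠ []) : (psi L).getLast? = some false := by
  induction L with
  | nil => simp at h
  | cons x L ih =>
    cases L with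
    | nil => simp [psi]
    | cons y T =>
      rw [psi_cons, psi_cons, List.getLast?_cons_cons]
      rw [psi_cons] at ih
      exact ih (by simp)

lemma psi_surj : ∀ τ : List Bool, τ.getLast? = some false → ∀ b : Bool,
    ∃ L : List Bool, psi L = τ ∧ (Phi L).1 = b
  | [], h, _ => by simp at h
  | [x], h, b => by
    simp only [List.getLast?_singleton, Option.some_inj] at h
    subst h
    refine ⟨[b], by simp [psi], ?_⟩
    cases b <;> simp [Phi, stp]
  | x :: y :: T, h, b => by
    rw [List.getLast?_cons_cons] at h
    obtain ⟨L₂, hψ, hφ⟩ := psi_surj (y :: T) h x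
    refine ⟨(xor x b) :: L₂, by simp [hψ, hφ], ?_⟩
    cases x <;> cases b <;> simp_all [stp]

def e0 (m : ℕ) : Bool ≃ {x // x ∈ ({r 1, sr 0} : Finset (DihedralGroup m))} where
  toFun := fun b => ⟨letter m b, by cases b <;> simp [letter]⟩
  invFun := fun x => if x.1 = sr 0 then true else false
  left_inv := by intro b; cases b <;> simp [letter]
  right_inv := by
    rintro ⟨x, hx⟩
    simp only [Finset.mem_insert, Finset.mem_singleton] at hx
    rcases hx with h | h <;> subst h <;> simp [letter]

lemma step1 (d : ℕ) (m : ℕ) :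
    Nat.card {w : Fin d → {x // x ∈ ({r 1, sr 0} : Finset (DihedralGroup m))} //
        (List.ofFn fun i => (w i : DihedralGroup m)).prod = 1} =
      (univ.filter (fun v : Vec d => ((v.1.map (letter m)).prod = 1))).card := by
  rw [← Fintype.card_subtype, ← Nat.card_eq_fintype_card]
  apply Nat.card_congr
  refine Equiv.subtypeEquiv
    ((Equiv.piCongrRight fun _ => (e0 m).symm).trans (Equiv.vectorEquivFin Bool d).symm) ?_
  intro w
  simp only [Equiv.trans_apply]
  have h0 : (Equiv.piCongrRight fun _ : Fin d => (e0 m).symm) w = fun i => (e0 m).symm (w i) := rfl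
  rw [h0]
  have h1 : ∀ i, ((w i : DihedralGroup m)) = letter m ((e0 m).symm (w i)) := by
    intro i
    conv_lhs => rw [← (e0 m).apply_symm_apply (w i)]
    rfl
  have h2 : ((Equiv.vectorEquivFin Bool d).symm fun i => (e0 m).symm (w i)).1
      = List.ofFn (fun i => (e0 m).symm (w i)) :=
    List.Vector.toList_ofFn _
  rw [h2, List.map_ofFn]
  have h3 : (List.ofFn fun i => ((w i : DihedralGroup m)))
      = List.ofFn ((letter m) ∘ fun i => (e0 m).symm (w i)) := by
    congr 1
    funext i
    exact h1 i
  rw [h3]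

lemma count_ofFn : ∀ (k : ℕ) (f : Fin k → Bool),
    (List.ofFn f).count true = (univ.filter (fun i => f i = true)).card
  | 0, f => by simp
  | k + 1, f => by
    rw [List.ofFn_succ, List.count_cons, count_ofFn k, Finset.card_filter,
      Finset.card_filter, Fin.sum_univ_succ]
    cases h : f 0 <;> simp [h, Fin.succ] <;> omega

lemma card_count (k : ℕ) (p : ℕ → Prop) [DecidablePred p] :
    (univ.filter (fun T : Vec k => p (T.1.count true))).card
      = ∑ q ∈ range (k+1), if p q then k.choose q else 0 := by
  rw [← Fintype.card_subtype]
  have e1 : {T : Vec k // p (T.1.count true)} ≃ {f : Fin k → Bool // p ((List.ofFn f).count true)} := by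
    refine (Equiv.vectorEquivFin Bool k).subtypeEquiv (fun T => ?_)
    have : (List.ofFn ((Equiv.vectorEquivFin Bool k) T)) = T.1 := by
      rw [← List.Vector.toList_ofFn]
      congr 1
      exact List.Vector.ofFn_get T
    rw [this]
  have e2 : {f : Fin k → Bool // p ((List.ofFn f).count true)} ≃
      {A : Finset (Fin k) // p A.card} := by
    refine Equiv.subtypeEquiv ⟨fun f => univ.filter (fun i => f i = true),
      fun A => fun i => decide (i ∈ A), ?_, ?_⟩ (fun f => ?_)
    · intro f; funext i; by_cases h : f i = true <;> simp [h]
    · intro A; ext i; simp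
    · rw [count_ofFn]
      rfl
  rw [Fintype.card_congr (e1.trans e2), Fintype.card_subtype]
  have hpart : (univ.filter (fun A : Finset (Fin k) => p A.card))
      = (range (k+1)).biUnion (fun q => if p q then powersetCard q univ else ∅) := by
    ext A
    simp only [mem_filter, mem_univ, true_and, mem_biUnion, mem_range]
    constructor
    · intro hA
      exact ⟨A.card, by have := Finset.card_le_univ A; simp at this; omega,
        by rw [if_pos hA]; simp [Finset.mem_powersetCard_univ]⟩
    · rintro ⟨q, hq, hA⟩
      split_ifs at hA with h
      · rw [Finset.mem_powersetCard_univ] at hA; rw [hA]; exact h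
      · simp at hA
  rw [hpart, Finset.card_biUnion]
  · apply Finset.sum_congr rfl
    intro q _
    split_ifs with h
    · simp [Finset.card_powersetCard]
    · simp
  · intro q _ q' _ hne
    simp only [Function.onFun]
    split_ifs
    · simp only [Finset.disjoint_left, Finset.mem_powersetCard_univ]
      intro A hA hA'
      omega
    all_goals simp

lemma extract {m a b : ℕ} (hm0 : 0 < m) (hb : b ≤ a) (h : (m:ℤ) ∣ ((a:ℤ) - b)) :
    ∃ c, a - b = c * m := by
  have hcast : ((a - b : ℕ) : ℤ) = (a:ℤ) - b := by omega
  rw [← hcast] at h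
  obtain ⟨c, hc⟩ := Int.natCast_dvd_natCast.mp h
  exact ⟨c, hc.trans (Nat.mul_comm m c)⟩

lemma divfact {m a b c : ℕ} (hm0 : 0 < m) (hc : a - b = c * m) : (a - b)/m = c := by
  rw [hc]; exact Nat.mul_div_cancel c hm0

lemma mkdvd {m a b l : ℕ} (hb : b ≤ a) (h : a - b = l * m) : (m:ℤ) ∣ ((a:ℤ) - b) := by
  have hcast : ((a - b : ℕ) : ℤ) = (a:ℤ) - b := by omega
  rw [← hcast, h]
  exact Int.natCast_dvd_natCast.mpr (dvd_mul_left m l)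

lemma cpos {c m a : ℕ} (hm0 : 0 < m) (hc : a = c * m) (ha : 0 < a) : 1 ≤ c ∧ c ≤ a := by
  rcases Nat.eq_zero_or_pos c with h0 | h1
  · subst h0; simp at hc; omega
  · exact ⟨h1, by calc c ≤ c * m := Nat.le_mul_of_pos_right c hm0
                     _ = a := hc.symm⟩

lemma arith (m k : ℕ) (hm : 3 ≤ m) :
    (∑ q ∈ range (k+1), if (m:ℤ) ∣ ((k:ℤ) + 1 - 2*q) then k.choose q else 0)
      = (if (k+1) % 2 = 0 then k.choose ((k+1)/2) else 0) +
        ∑ l ∈ (Finset.Icc 1 (k+1)).filter (fun l => l * m ≤ k+1 ∧ (k+1) % 2 = (l * m) % 2),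
          (k+1).choose ((k+1 - l * m) / 2) := by
  have hm0 : 0 < m := by omega
  set G := (Finset.Icc 1 (k+1)).filter (fun l => l * m ≤ k+1 ∧ (k+1) % 2 = (l * m) % 2) with hG
  set G2 := G.filter (fun l => l*m + 2 ≤ k+1) with hG2
  have hGmem : ∀ l, l ∈ G ↔ (1 ≤ l ∧ l*m ≤ k+1 ∧ (k+1)%2 = (l*m)%2) := by
    intro l
    simp only [hG, mem_filter, mem_Icc]
    constructor
    · rintro ⟨⟨h1, _⟩, h3, h4⟩; exact ⟨h1, h3, h4⟩
    · rintro ⟨h1, h3, h4⟩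
      exact ⟨⟨h1, le_trans (Nat.le_mul_of_pos_right l hm0) h3⟩, h3, h4⟩
  have hG2mem : ∀ l, l ∈ G2 ↔ (1 ≤ l ∧ l*m + 2 ≤ k+1 ∧ (k+1)%2 = (l*m)%2) := by
    intro l
    simp only [hG2, mem_filter, hGmem]
    constructor
    · rintro ⟨⟨h1, _, h4⟩, h5⟩; exact ⟨h1, h5, h4⟩
    · rintro ⟨h1, h5, h4⟩; exact ⟨⟨h1, by omega, h4⟩, h5⟩
  have hGprod : ∀ l ∈ G, 1 ≤ l * m := by
    intro l hl
    rw [hGmem] at hl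
    exact le_trans hl.1 (Nat.le_mul_of_pos_right l hm0)
  rw [← Finset.sum_filter]
  set F := (range (k+1)).filter (fun q => (m:ℤ) ∣ ((k:ℤ) + 1 - 2*(q:ℕ))) with hF
  have hFmem : ∀ q, q ∈ F ↔ (q < k + 1 ∧ (m:ℤ) ∣ ((k:ℤ) + 1 - 2*q)) := by
    intro q; simp [hF, mem_filter, mem_range]
  rw [← Finset.sum_filter_add_sum_filter_not F (fun q => 2*q < k+1) (fun q => k.choose q),
    ← Finset.sum_filter_add_sum_filter_not (F.filter (fun q => ¬ 2*q < k+1))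
      (fun q => 2*q = k+1) (fun q => k.choose q)]
  -- piece A : the q's with 2q < k+1
  have hA : ∑ q ∈ F.filter (fun q => 2*q < k+1), k.choose q
      = ∑ l ∈ G, k.choose ((k+1 - l*m)/2) := by
    refine Finset.sum_nbij' (fun q => (k+1-2*q)/m) (fun l => (k+1-l*m)/2) ?_ ?_ ?_ ?_ ?_
    · intro q hq
      rw [mem_filter, hFmem] at hq
      obtain ⟨⟨hq1, hq2⟩, hq3⟩ := hq
      have hq2' : (m:ℤ) ∣ ((k+1 : ℕ) : ℤ) - ((2*q : ℕ) : ℤ) := by push_cast; exact hq2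
      obtain ⟨c, hc⟩ := extract hm0 (by omega) hq2'
      have hdiv := divfact hm0 hc
      have hcp := cpos hm0 hc (by omega)
      simp only [hdiv, hGmem]
      exact ⟨hcp.1, by omega, by omega⟩
    · intro l hl
      have hlm := hGprod l hl
      rw [hGmem] at hl
      obtain ⟨h1, h3, h4⟩ := hl
      simp only [mem_filter, hFmem]
      refine ⟨⟨by omega, ?_⟩, by omega⟩
      have he : (k+1) - 2*((k+1-l*m)/2) = l*m := by omega
      have hmk := mkdvd (show 2*((k+1-l*m)/2) ≤ k+1 by omega) he
      have h6 : ((k:ℤ) + 1 - 2*(((k+1-l*m)/2 : ℕ)) : ℤ)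
          = ((k+1:ℕ):ℤ) - ((2*((k+1-l*m)/2) : ℕ):ℤ) := by push_cast; ring
      rw [h6]
      exact hmk
    · intro q hq
      rw [mem_filter, hFmem] at hq
      obtain ⟨⟨hq1, hq2⟩, hq3⟩ := hq
      have hq2' : (m:ℤ) ∣ ((k+1 : ℕ) : ℤ) - ((2*q : ℕ) : ℤ) := by push_cast; exact hq2
      obtain ⟨c, hc⟩ := extract hm0 (by omega) hq2'
      have hdiv := divfact hm0 hc
      simp only [hdiv]
      omega
    · intro l hl
      have hlm := hGprod l hl
      rw [hGmem] at hl
      obtain ⟨h1, h3, h4⟩ := hl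
      have he : k+1-2*((k+1-l*m)/2) = l*m := by omega
      simp only [he]
      exact Nat.mul_div_cancel l hm0
    · intro q hq
      rw [mem_filter, hFmem] at hq
      obtain ⟨⟨hq1, hq2⟩, hq3⟩ := hq
      have hq2' : (m:ℤ) ∣ ((k+1 : ℕ) : ℤ) - ((2*q : ℕ) : ℤ) := by push_cast; exact hq2
      obtain ⟨c, hc⟩ := extract hm0 (by omega) hq2'
      have hdiv := divfact hm0 hc
      simp only [hdiv]
      congr 1
      omega
  -- middle piece
  have hmid : ∑ q ∈ (F.filter (fun q => ¬ 2*q < k+1)).filter (fun q => 2*q = k+1), k.choose q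
      = (if (k+1) % 2 = 0 then k.choose ((k+1)/2) else 0) := by
    by_cases hp : (k+1) % 2 = 0
    · rw [if_pos hp]
      have hset : (F.filter (fun q => ¬ 2*q < k+1)).filter (fun q => 2*q = k+1)
          = {(k+1)/2} := by
        ext q
        simp only [mem_filter, hFmem, mem_singleton]
        constructor
        · rintro ⟨⟨⟨h1, h2⟩, h3⟩, h4⟩; omega
        · intro h
          subst h
          refine ⟨⟨⟨by omega, ?_⟩, by omega⟩, by omega⟩
          have : ((k:ℤ) + 1 - 2*(((k+1)/2 : ℕ)) : ℤ) = 0 := by omega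
          rw [this]
          exact dvd_zero _
      rw [hset, Finset.sum_singleton]
    · rw [if_neg hp]
      have hset : (F.filter (fun q => ¬ 2*q < k+1)).filter (fun q => 2*q = k+1) = ∅ := by
        ext q
        simp only [mem_filter, hFmem, notMem_empty, iff_false]
        rintro ⟨⟨⟨h1, h2⟩, h3⟩, h4⟩
        omega
      rw [hset, Finset.sum_empty]
  -- piece B : the q's with 2q > k+1
  have hB : ∑ q ∈ (F.filter (fun q => ¬ 2*q < k+1)).filter (fun q => ¬ 2*q = k+1), k.choose q
      = ∑ l ∈ G2, k.choose ((k+1 - l*m)/2 - 1) := by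
    refine Finset.sum_nbij' (fun q => (2*q-(k+1))/m) (fun l => (k+1+l*m)/2) ?_ ?_ ?_ ?_ ?_
    · intro q hq
      simp only [mem_filter, hFmem] at hq
      obtain ⟨⟨⟨hq1, hq2⟩, hq3⟩, hq4⟩ := hq
      have hq2' : (m:ℤ) ∣ ((2*q : ℕ):ℤ) - (k+1 : ℕ) := by
        have : (((2*q : ℕ):ℤ) - ((k+1 : ℕ):ℤ)) = -((k:ℤ) + 1 - 2*q) := by push_cast; ring
        rw [this]
        exact (dvd_neg).mpr hq2
      obtain ⟨c, hc⟩ := extract hm0 (by omega) hq2'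
      have hdiv := divfact hm0 hc
      have hcp := cpos hm0 hc (by omega)
      simp only [hdiv, hG2mem]
      exact ⟨hcp.1, by omega, by omega⟩
    · intro l hl
      rw [hG2mem] at hl
      obtain ⟨h1, h3, h4⟩ := hl
      have hlm : 1 ≤ l*m := le_trans h1 (Nat.le_mul_of_pos_right l hm0)
      simp only [mem_filter, hFmem]
      refine ⟨⟨⟨by omega, ?_⟩, by omega⟩, by omega⟩
      have he : 2*((k+1+l*m)/2) - (k+1) = l*m := by omega
      have := mkdvd (show (k+1) ≤ 2*((k+1+l*m)/2) by omega) he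
      have h5 : ((k:ℤ) + 1 - 2*(((k+1+l*m)/2 : ℕ)) : ℤ)
          = -(((2*((k+1+l*m)/2) : ℕ) : ℤ) - ((k+1 : ℕ) : ℤ)) := by push_cast; ring
      rw [h5]
      exact (dvd_neg).mpr this
    · intro q hq
      simp only [mem_filter, hFmem] at hq
      obtain ⟨⟨⟨hq1, hq2⟩, hq3⟩, hq4⟩ := hq
      have hq2' : (m:ℤ) ∣ ((2*q : ℕ):ℤ) - (k+1 : ℕ) := by
        have : (((2*q : ℕ):ℤ) - ((k+1 : ℕ):ℤ)) = -((k:ℤ) + 1 - 2*q) := by push_cast; ring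
        rw [this]
        exact (dvd_neg).mpr hq2
      obtain ⟨c, hc⟩ := extract hm0 (by omega) hq2'
      have hdiv := divfact hm0 hc
      simp only [hdiv]
      omega
    · intro l hl
      rw [hG2mem] at hl
      obtain ⟨h1, h3, h4⟩ := hl
      have hlm : 1 ≤ l*m := le_trans h1 (Nat.le_mul_of_pos_right l hm0)
      have he : 2*((k+1+l*m)/2) - (k+1) = l*m := by omega
      simp only [he]
      exact Nat.mul_div_cancel l hm0
    · intro q hq
      simp only [mem_filter, hFmem] at hq
      obtain ⟨⟨⟨hq1, hq2⟩, hq3⟩, hq4⟩ := hq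
      have hq2' : (m:ℤ) ∣ ((2*q : ℕ):ℤ) - (k+1 : ℕ) := by
        have : (((2*q : ℕ):ℤ) - ((k+1 : ℕ):ℤ)) = -((k:ℤ) + 1 - 2*q) := by push_cast; ring
        rw [this]
        exact (dvd_neg).mpr hq2
      obtain ⟨c, hc⟩ := extract hm0 (by omega) hq2'
      have hdiv := divfact hm0 hc
      simp only [hdiv]
      rw [← Nat.choose_symm (show q ≤ k by omega)]
      congr 1
      omega
  -- Pascal step
  have hC : ∑ l ∈ G, (k+1).choose ((k+1 - l*m)/2)
      = (∑ l ∈ G, k.choose ((k+1 - l*m)/2)) + ∑ l ∈ G2, k.choose ((k+1 - l*m)/2 - 1) := by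
    rw [← Finset.sum_filter_add_sum_filter_not G (fun l => l*m + 2 ≤ k+1)
        (fun l => (k+1).choose ((k+1 - l*m)/2)),
      ← Finset.sum_filter_add_sum_filter_not G (fun l => l*m + 2 ≤ k+1)
        (fun l => k.choose ((k+1 - l*m)/2))]
    have h1 : ∑ l ∈ G.filter (fun l => l*m + 2 ≤ k+1), (k+1).choose ((k+1 - l*m)/2)
        = ∑ l ∈ G.filter (fun l => l*m + 2 ≤ k+1), (k.choose ((k+1 - l*m)/2 - 1)
            + k.choose ((k+1 - l*m)/2)) := by
      apply Finset.sum_congr rfl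
      intro l hl
      simp only [mem_filter, hGmem] at hl
      obtain ⟨⟨ha, hb, hcpar⟩, hd2⟩ := hl
      have ht : (k+1-l*m)/2 = ((k+1-l*m)/2 - 1) + 1 := by omega
      rw [ht, Nat.choose_succ_succ]
      simp [Nat.succ_eq_add_one]
    have h2 : ∑ l ∈ G.filter (fun l => ¬ l*m + 2 ≤ k+1), (k+1).choose ((k+1 - l*m)/2)
        = ∑ l ∈ G.filter (fun l => ¬ l*m + 2 ≤ k+1), k.choose ((k+1 - l*m)/2) := by
      apply Finset.sum_congr rfl
      intro l hl
      simp only [mem_filter, hGmem] at hl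
      obtain ⟨⟨ha, hb, hcpar⟩, hd2⟩ := hl
      have h0 : (k+1-l*m)/2 = 0 := by omega
      rw [h0, Nat.choose_zero_right, Nat.choose_zero_right]
    rw [h1, h2, Finset.sum_add_distrib, ← hG2]
    ring
  rw [hA, hmid, hB, hC]
  ring



end DWC

open DWC in
theorem dihedral_wordCount_formula (m : ℕ) (hm : 3 ≤ m) (d : ℕ) (hd : 1 ≤ d) :
    Nat.card {w : Fin d → {x // x ∈ ({r 1, sr 0} : Finset (DihedralGroup m))} //
        (List.ofFn fun i => (w i : DihedralGroup m)).prod = 1} =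
      (if d % 2 = 0 then (d - 1).choose (d / 2) else 0) +
        ∑ l ∈ (Finset.Icc 1 d).filter (fun l => l * m ≤ d ∧ d % 2 = (l * m) % 2),
          d.choose ((d - l * m) / 2) := by
  obtain ⟨k, rfl⟩ : ∃ k, d = k + 1 := ⟨d - 1, by omega⟩
  haveI : NeZero m := ⟨by omega⟩
  rw [step1]
  -- Step 2 : rewrite the condition
  have hfilter : (univ.filter (fun v : Vec (k+1) => ((v.1.map (letter m)).prod = 1)))
      = univ.filter (fun v : Vec (k+1) =>
          ((Phi v.1).1 = false ∧ (m:ℤ) ∣ (Phi v.1).2)) := by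
    apply Finset.filter_congr
    intro v _
    rw [prod_map_letter]
    rcases h : Phi v.1 with ⟨e, a⟩
    cases e
    · simp [-r_zero, one_def, ZMod.intCast_zmod_eq_zero_iff_dvd]
    · simp [-r_zero, one_def]
  rw [hfilter]
  -- Step 3 : apply psi
  have hb1 : (univ.filter (fun v : Vec (k+1) =>
          ((Phi v.1).1 = false ∧ (m:ℤ) ∣ (Phi v.1).2))).card
      = (univ.filter (fun τ : Vec (k+1) =>
          (τ.1.getLast? = some false ∧ (m:ℤ) ∣ ((k:ℤ) + 1 - 2 * τ.1.count true)))).card := by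
    refine Finset.card_bij (fun v _ => ⟨psi v.1, by simp [v.2]⟩) ?_ ?_ ?_
    · rintro ⟨L, hL⟩ hv
      replace hv := (Finset.mem_filter_univ _).mp hv; refine (Finset.mem_filter_univ _).mpr ?_
      obtain ⟨h1, h2⟩ := hv
      have hne : L ≠ [] := by intro h; rw [h] at hL; simp at hL
      refine ⟨psi_getLast? L hne, ?_⟩
      have h3 := phi_snd_eq L
      rw [h1, hL] at h3
      simp only [if_false, add_zero, Bool.false_eq_true] at h3
      have h4 : ((k:ℤ) + 1 - 2 * (psi L).count true) = (Phi L).2 := by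
        push_cast at h3 ⊢
        omega
      rw [h4]
      exact h2
    · rintro ⟨L, hL⟩ hv ⟨L', hL'⟩ hv' h
      replace hv := (Finset.mem_filter_univ _).mp hv; replace hv' := (Finset.mem_filter_univ _).mp hv'
      have h' : psi L = psi L' := congrArg Subtype.val h
      exact Subtype.ext (psi_inj L L' h' (hv.1.trans hv'.1.symm))
    · rintro ⟨τ, hτ⟩ hτ2
      replace hτ2 := (Finset.mem_filter_univ _).mp hτ2
      obtain ⟨hlast, hdvd⟩ := hτ2
      obtain ⟨L, hψ, hφ⟩ := psi_surj τ hlast false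
      have hLlen : L.length = k + 1 := by rw [← psi_length L, hψ, hτ]
      refine ⟨⟨L, hLlen⟩, ?_, ?_⟩
      · refine (Finset.mem_filter_univ _).mpr ?_
        refine ⟨hφ, ?_⟩
        have h3 := phi_snd_eq L
        rw [hφ, hψ, hLlen] at h3
        simp only [if_false, add_zero, Bool.false_eq_true] at h3
        have h4 : (Phi L).2 = ((k:ℤ) + 1 - 2 * τ.count true) := by
          push_cast at h3 ⊢
          omega
        rw [h4]
        exact hdvd
      · exact Subtype.ext hψ
  rw [hb1]
  -- Step 4 : drop the last (always-false) element
  have hb2 : (univ.filter (fun τ : Vec (k+1) =>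
          (τ.1.getLast? = some false ∧ (m:ℤ) ∣ ((k:ℤ) + 1 - 2 * τ.1.count true)))).card
      = (univ.filter (fun T : Vec k =>
          ((m:ℤ) ∣ ((k:ℤ) + 1 - 2 * T.1.count true)))).card := by
    symm
    refine Finset.card_bij (fun T _ => ⟨T.1 ++ [false], by simp [T.2]⟩) ?_ ?_ ?_
    · rintro ⟨L, hL⟩ hv
      replace hv := (Finset.mem_filter_univ _).mp hv; refine (Finset.mem_filter_univ _).mpr ?_
      constructor
      · exact List.getLast?_concat (l := L)
      · simpa using hv
    · rintro ⟨L, hL⟩ _ ⟨L', hL'⟩ _ h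
      have h' : L ++ [false] = L' ++ [false] := congrArg Subtype.val h
      have h2 := congrArg List.dropLast h'
      simp only [List.dropLast_concat] at h2
      exact Subtype.ext h2
    · rintro ⟨τ, hτ⟩ hτ2
      replace hτ2 := (Finset.mem_filter_univ _).mp hτ2
      obtain ⟨hlast, hdvd⟩ := hτ2
      have hne : τ ≠ [] := by intro h; rw [h] at hτ; simp at hτ
      have hrec : τ.dropLast ++ [false] = τ :=
        List.dropLast_append_getLast? false hlast
      refine ⟨⟨τ.dropLast, by rw [List.length_dropLast, hτ]; rfl⟩, ?_, ?_⟩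
      · refine (Finset.mem_filter_univ _).mpr ?_
        have : τ.count true = τ.dropLast.count true := by
          conv_lhs => rw [← hrec]
          simp
        rwa [this] at hdvd
      · exact Subtype.ext hrec
  rw [hb2, card_count k (fun q => (m:ℤ) ∣ ((k:ℤ) + 1 - 2*q)), arith m k hm]
  simp only [Nat.add_sub_cancel]
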